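/- Suppose Ω ⊂ ℝ² is open, ψ, φ are C², ψ > 0 on Ω, div(ψ²∇(φ/ψ)) = 0 on Ω, φ = 0 on ∂Ω, and φ is bounded on Ω with φ(x) → 0 as |x| → ∞ in Ω. If for each R ≥ 1 there is a cutoff ζ_R equal to 1 on B(0,R), supported in B(0,2R), with |∇ζ_R| ≤ C/R, then ∫_Ω |∇(φ/ψ)|² ψ² dx = 0, hence φ/ψ is locally constant on Ω. -/

import Mathlib

open MeasureTheory Set

noncomputable def pdx (f : ℝ × ℝ → ℝ) (p : ℝ × ℝ) : ℝ := deriv (fun t => f (t, p.2)) p.1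
noncomputable def pdy (f : ℝ × ℝ → ℝ) (p : ℝ × ℝ) : ℝ := deriv (fun t => f (p.1, t)) p.2



lemma sliceX_differentiableAt {f : ℝ × ℝ → ℝ} {p : ℝ × ℝ} (hf : DifferentiableAt ℝ f p) :
    DifferentiableAt ℝ (fun t => f (t, p.2)) p.1 := by
  have : (fun t => f (t, p.2)) = f ∘ (fun t : ℝ => (t, p.2)) := rfl
  rw [this]
  exact hf.comp _ (differentiableAt_id.prodMk (differentiableAt_const _))

lemma sliceY_differentiableAt {f : ℝ × ℝ → ℝ} {p : ℝ × ℝ} (hf : DifferentiableAt ℝ f p) :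
    DifferentiableAt ℝ (fun t => f (p.1, t)) p.2 := by
  have : (fun t => f (p.1, t)) = f ∘ (fun t : ℝ => (p.1, t)) := rfl
  rw [this]
  exact hf.comp _ ((differentiableAt_const _).prodMk differentiableAt_id)

lemma pdx_hasDerivAt {f : ℝ × ℝ → ℝ} {p : ℝ × ℝ} (hf : DifferentiableAt ℝ f p) :
    HasDerivAt (fun t => f (t, p.2)) (pdx f p) p.1 :=
  (sliceX_differentiableAt hf).hasDerivAt

lemma pdy_hasDerivAt {f : ℝ × ℝ → ℝ} {p : ℝ × ℝ} (hf : DifferentiableAt ℝ f p) :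
    HasDerivAt (fun t => f (p.1, t)) (pdy f p) p.2 :=
  (sliceY_differentiableAt hf).hasDerivAt

lemma pdx_congr {f g : ℝ × ℝ → ℝ} {p : ℝ × ℝ} (hfg : f =ᶠ[nhds p] g) : pdx f p = pdx g p := by
  have ht : Filter.Tendsto (fun t : ℝ => (t, p.2)) (nhds p.1) (nhds p) := by
    have : ContinuousAt (fun t : ℝ => (t, p.2)) p.1 := by fun_prop
    exact this
  exact Filter.EventuallyEq.deriv_eq (hfg.comp_tendsto ht)

lemma pdy_congr {f g : ℝ × ℝ → ℝ} {p : ℝ × ℝ} (hfg : f =ᶠ[nhds p] g) : pdy f p = pdy g p := by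
  have ht : Filter.Tendsto (fun t : ℝ => (p.1, t)) (nhds p.2) (nhds p) := by
    have : ContinuousAt (fun t : ℝ => (p.1, t)) p.2 := by fun_prop
    exact this
  exact Filter.EventuallyEq.deriv_eq (hfg.comp_tendsto ht)

lemma pdx_const {f : ℝ × ℝ → ℝ} {p : ℝ × ℝ} {c : ℝ} (hfg : f =ᶠ[nhds p] fun _ => c) :
    pdx f p = 0 := by
  rw [pdx_congr hfg]
  simp [pdx]

lemma pdy_const {f : ℝ × ℝ → ℝ} {p : ℝ × ℝ} {c : ℝ} (hfg : f =ᶠ[nhds p] fun _ => c) :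
    pdy f p = 0 := by
  rw [pdy_congr hfg]
  simp [pdy]

lemma pdx_eq_fderiv {f : ℝ × ℝ → ℝ} {p : ℝ × ℝ} (hf : DifferentiableAt ℝ f p) :
    pdx f p = fderiv ℝ f p (1, 0) := by
  have h1 : HasDerivAt (fun t => f (t, p.2)) (fderiv ℝ f p (1, 0)) p.1 := by
    have h2 : HasDerivAt (fun t : ℝ => (t, p.2)) ((1 : ℝ), (0 : ℝ)) p.1 := by
      have := ((hasDerivAt_id p.1).prodMk (hasDerivAt_const p.1 p.2))
      simpa using this
    exact (hf.hasFDerivAt.comp_hasDerivAt p.1 h2)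
  exact h1.deriv.symm ▸ rfl

lemma pdy_eq_fderiv {f : ℝ × ℝ → ℝ} {p : ℝ × ℝ} (hf : DifferentiableAt ℝ f p) :
    pdy f p = fderiv ℝ f p (0, 1) := by
  have h1 : HasDerivAt (fun t => f (p.1, t)) (fderiv ℝ f p (0, 1)) p.2 := by
    have h2 : HasDerivAt (fun t : ℝ => (p.1, t)) ((0 : ℝ), (1 : ℝ)) p.2 := by
      have := ((hasDerivAt_const p.2 p.1).prodMk (hasDerivAt_id p.2))
      simpa using this
    exact (hf.hasFDerivAt.comp_hasDerivAt p.2 h2)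
  exact h1.deriv.symm ▸ rfl

lemma contDiffAt_pdx {f : ℝ × ℝ → ℝ} {p : ℝ × ℝ} (hf : ContDiffAt ℝ 2 f p) :
    ContDiffAt ℝ 1 (pdx f) p := by
  obtain ⟨w, hw, hfw⟩ := hf.contDiffOn (le_refl (2 : WithTop ℕ∞)) (by simp)
  set U := interior w with hU
  have hUo : IsOpen U := isOpen_interior
  have hpU : p ∈ U := mem_interior_iff_mem_nhds.2 hw
  have hfU : ContDiffOn ℝ 2 f U := hfw.mono interior_subset
  have hfd : ContDiffOn ℝ 1 (fderiv ℝ f) U :=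
    hfU.fderiv_of_isOpen hUo (by norm_num)
  have happ : ContDiffOn ℝ 1 (fun q => fderiv ℝ f q (1, 0)) U :=
    hfd.clm_apply contDiffOn_const
  have : ContDiffAt ℝ 1 (fun q => fderiv ℝ f q (1, 0)) p :=
    happ.contDiffAt (hUo.mem_nhds hpU)
  apply this.congr_of_eventuallyEq
  filter_upwards [hUo.mem_nhds hpU] with q hq
  exact pdx_eq_fderiv ((hfU.differentiableOn (by norm_num) q hq).differentiableAt (hUo.mem_nhds hq))

lemma contDiffAt_pdy {f : ℝ × ℝ → ℝ} {p : ℝ × ℝ} (hf : ContDiffAt ℝ 2 f p) :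
    ContDiffAt ℝ 1 (pdy f) p := by
  obtain ⟨w, hw, hfw⟩ := hf.contDiffOn (le_refl (2 : WithTop ℕ∞)) (by simp)
  set U := interior w with hU
  have hUo : IsOpen U := isOpen_interior
  have hpU : p ∈ U := mem_interior_iff_mem_nhds.2 hw
  have hfU : ContDiffOn ℝ 2 f U := hfw.mono interior_subset
  have hfd : ContDiffOn ℝ 1 (fderiv ℝ f) U :=
    hfU.fderiv_of_isOpen hUo (by norm_num)
  have happ : ContDiffOn ℝ 1 (fun q => fderiv ℝ f q (0, 1)) U :=
    hfd.clm_apply contDiffOn_const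
  have : ContDiffAt ℝ 1 (fun q => fderiv ℝ f q (0, 1)) p :=
    happ.contDiffAt (hUo.mem_nhds hpU)
  apply this.congr_of_eventuallyEq
  filter_upwards [hUo.mem_nhds hpU] with q hq
  exact pdy_eq_fderiv ((hfU.differentiableOn (by norm_num) q hq).differentiableAt (hUo.mem_nhds hq))


lemma amgm_aux (a1 a2 b1 b2 : ℝ) :
    |2*(a1*b1+a2*b2)| ≤ (1/4)*(a1^2+a2^2)+4*(b1^2+b2^2) := by
  rw [abs_le]
  constructor <;> nlinarith [sq_nonneg (a1 - 4*b1), sq_nonneg (a2 - 4*b2),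
    sq_nonneg (a1 + 4*b1), sq_nonneg (a2 + 4*b2)]

lemma sqrt_tri (a b c d : ℝ) :
    Real.sqrt ((a+c)^2+(b+d)^2) ≤ Real.sqrt (a^2+b^2) + Real.sqrt (c^2+d^2) := by
  have hA : (0:ℝ) ≤ a^2+b^2 := by positivity
  have hC : (0:ℝ) ≤ c^2+d^2 := by positivity
  have hcs : a*c+b*d ≤ Real.sqrt (a^2+b^2) * Real.sqrt (c^2+d^2) := by
    have h1 : (a*c+b*d) ≤ |a*c+b*d| := le_abs_self _
    have h2 : |a*c+b*d|^2 ≤ (a^2+b^2)*(c^2+d^2) := by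
      rw [sq_abs]; nlinarith [sq_nonneg (a*d-b*c)]
    have h3 : |a*c+b*d| ≤ Real.sqrt ((a^2+b^2)*(c^2+d^2)) := by
      rw [← Real.sqrt_sq (abs_nonneg _)]
      exact Real.sqrt_le_sqrt h2
    rw [Real.sqrt_mul hA] at h3
    linarith
  have h4 : (a+c)^2+(b+d)^2 ≤ (Real.sqrt (a^2+b^2) + Real.sqrt (c^2+d^2))^2 := by
    have e1 : Real.sqrt (a^2+b^2)^2 = a^2+b^2 := Real.sq_sqrt hA
    have e2 : Real.sqrt (c^2+d^2)^2 = c^2+d^2 := Real.sq_sqrt hC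
    nlinarith
  calc Real.sqrt ((a+c)^2+(b+d)^2) ≤ Real.sqrt ((Real.sqrt (a^2+b^2) + Real.sqrt (c^2+d^2))^2) :=
        Real.sqrt_le_sqrt h4
    _ = _ := Real.sqrt_sq (by positivity)

lemma smoothTransition_deriv_zero_nonpos {x : ℝ} (hx : x ≤ 0) :
    deriv Real.smoothTransition x = 0 := by
  rcases lt_or_eq_of_le hx with hlt | heq
  · have : Real.smoothTransition =ᶠ[nhds x] fun _ => 0 := by
      filter_upwards [Iio_mem_nhds hlt] with y hy
      exact Real.smoothTransition.zero_of_nonpos (le_of_lt hy)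
    rw [this.deriv_eq]; simp
  · -- x = 0 : use continuity of deriv
    subst heq
    have hc : Continuous (deriv Real.smoothTransition) :=
      (Real.smoothTransition.contDiff (n := ⊤)).continuous_deriv (by exact_mod_cast le_top)
    have hz : ∀ y < (0:ℝ), deriv Real.smoothTransition y = 0 := by
      intro y hy
      have : Real.smoothTransition =ᶠ[nhds y] fun _ => 0 := by
        filter_upwards [Iio_mem_nhds hy] with z hz
        exact Real.smoothTransition.zero_of_nonpos (le_of_lt hz)
      rw [this.deriv_eq]; simp
    have : Filter.Tendsto (deriv Real.smoothTransition) (nhdsWithin 0 (Iio 0)) (nhds (deriv Real.smoothTransition 0)) :=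
      (hc.tendsto 0).mono_left nhdsWithin_le_nhds
    have h0 : Filter.Tendsto (deriv Real.smoothTransition) (nhdsWithin 0 (Iio 0)) (nhds 0) := by
      apply Filter.Tendsto.congr' _ tendsto_const_nhds
      filter_upwards [self_mem_nhdsWithin] with y hy
      exact (hz y hy).symm
    exact tendsto_nhds_unique this h0

lemma smoothTransition_deriv_zero_ge_one {x : ℝ} (hx : 1 ≤ x) :
    deriv Real.smoothTransition x = 0 := by
  rcases lt_or_eq_of_le hx with hlt | heq
  · have : Real.smoothTransition =ᶠ[nhds x] fun _ => 1 := by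
      filter_upwards [Ioi_mem_nhds hlt] with y hy
      exact Real.smoothTransition.one_of_one_le (le_of_lt hy)
    rw [this.deriv_eq]; simp
  · have hx0 : x = 1 := heq.symm
    subst hx0
    have hc : Continuous (deriv Real.smoothTransition) :=
      (Real.smoothTransition.contDiff (n := ⊤)).continuous_deriv (by exact_mod_cast le_top)
    have hz : ∀ y ∈ Ioi (1:ℝ), deriv Real.smoothTransition y = 0 := by
      intro y hy
      have : Real.smoothTransition =ᶠ[nhds y] fun _ => 1 := by
        filter_upwards [Ioi_mem_nhds hy] with z hz
        exact Real.smoothTransition.one_of_one_le (le_of_lt hz)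
      rw [this.deriv_eq]; simp
    have h1 : Filter.Tendsto (deriv Real.smoothTransition) (nhdsWithin 1 (Ioi 1)) (nhds (deriv Real.smoothTransition 1)) :=
      (hc.tendsto 1).mono_left nhdsWithin_le_nhds
    have h0 : Filter.Tendsto (deriv Real.smoothTransition) (nhdsWithin 1 (Ioi 1)) (nhds 0) := by
      apply Filter.Tendsto.congr' _ tendsto_const_nhds
      filter_upwards [self_mem_nhdsWithin] with y hy
      exact (hz y hy).symm
    exact tendsto_nhds_unique h1 h0



lemma smoothTransition_deriv_bound : ∃ B : ℝ, 0 < B ∧ ∀ x, |deriv Real.smoothTransition x| ≤ B := by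
  have hc : Continuous (deriv Real.smoothTransition) :=
    (Real.smoothTransition.contDiff (n := ⊤)).continuous_deriv (by exact_mod_cast le_top)
  obtain ⟨B, hB⟩ := (isCompact_Icc (a := (0:ℝ)) (b := 1)).exists_bound_of_continuousOn
    hc.continuousOn
  refine ⟨max B 1, by positivity, fun x => ?_⟩
  rcases le_or_gt x 0 with hx | hx
  · rw [smoothTransition_deriv_zero_nonpos hx]; simp
  rcases le_or_gt 1 x with hx1 | hx1
  · rw [smoothTransition_deriv_zero_ge_one hx1]; simp
  · have := hB x ⟨le_of_lt hx, le_of_lt hx1⟩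
    rw [Real.norm_eq_abs] at this
    exact le_trans this (le_max_left _ _)

/-- packaged cutoff in the value of φ -/
lemma exists_chi : ∃ c₀ : ℝ, 0 < c₀ ∧ ∀ ε : ℝ, 0 < ε → ∃ χ : ℝ → ℝ,
    ContDiff ℝ (⊤ : ℕ∞) χ ∧ (∀ t, 0 ≤ χ t) ∧ (∀ t, χ t ≤ 1) ∧
    (∀ t, |t| ≤ ε → χ t = 0) ∧ (∀ t, 2*ε ≤ |t| → χ t = 1) ∧
    (∀ t, |t| ≤ ε → deriv χ t = 0) ∧ (∀ t, 2*ε < |t| → deriv χ t = 0) ∧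
    (∀ t, |deriv χ t * t| ≤ c₀) := by
  obtain ⟨B, hB0, hB⟩ := smoothTransition_deriv_bound
  refine ⟨8*B/3, by positivity, fun ε hε => ?_⟩
  set s := Real.smoothTransition
  set χ : ℝ → ℝ := fun t => s ((t^2 - ε^2)/(3*ε^2)) with hχ
  have harg : ContDiff ℝ (⊤ : ℕ∞) (fun t : ℝ => (t^2 - ε^2)/(3*ε^2)) := by
    apply ContDiff.div_const
    exact (contDiff_id.pow 2).sub contDiff_const
  have hχc : ContDiff ℝ (⊤ : ℕ∞) χ := Real.smoothTransition.contDiff.comp harg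
  -- derivative of χ
  have hder : ∀ t : ℝ, HasDerivAt χ (deriv s ((t^2-ε^2)/(3*ε^2)) * (2*t/(3*ε^2))) t := by
    intro t
    have h1 : HasDerivAt (fun t : ℝ => (t^2 - ε^2)/(3*ε^2)) (2*t/(3*ε^2)) t := by
      have h0 : HasDerivAt (fun t : ℝ => t^2 - ε^2) (2*t) t := by
        simpa using ((hasDerivAt_pow 2 t).sub_const (ε^2))
      exact h0.div_const (3*ε^2)
    have h2 : HasDerivAt s (deriv s ((t^2-ε^2)/(3*ε^2))) ((t^2-ε^2)/(3*ε^2)) :=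
      ((Real.smoothTransition.contDiff (n := ⊤)).differentiable (by simp)).differentiableAt.hasDerivAt
    exact h2.comp t h1
  have hderiv : ∀ t : ℝ, deriv χ t = deriv s ((t^2-ε^2)/(3*ε^2)) * (2*t/(3*ε^2)) :=
    fun t => (hder t).deriv
  have habs : ∀ t : ℝ, |t| ≤ ε → (t^2-ε^2)/(3*ε^2) ≤ 0 := by
    intro t ht
    apply div_nonpos_of_nonpos_of_nonneg _ (by positivity)
    nlinarith [abs_nonneg t, sq_abs t]
  have habs2 : ∀ t : ℝ, 2*ε ≤ |t| → 1 ≤ (t^2-ε^2)/(3*ε^2) := by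
    intro t ht
    rw [le_div_iff₀ (by positivity)]
    nlinarith [sq_abs t, abs_nonneg t]
  refine ⟨χ, hχc, fun t => Real.smoothTransition.nonneg _, fun t => Real.smoothTransition.le_one _,
    fun t ht => Real.smoothTransition.zero_of_nonpos (habs t ht),
    fun t ht => Real.smoothTransition.one_of_one_le (habs2 t ht), ?_, ?_, ?_⟩
  · intro t ht
    rw [hderiv t, smoothTransition_deriv_zero_nonpos (habs t ht), zero_mul]
  · intro t ht
    rw [hderiv t, smoothTransition_deriv_zero_ge_one (habs2 t (le_of_lt ht)), zero_mul]
  · intro t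
    rcases le_or_gt |t| (2*ε) with ht | ht
    · rw [hderiv t]
      have h1 : |deriv s ((t^2-ε^2)/(3*ε^2))| ≤ B := hB _
      have e : deriv s ((t^2-ε^2)/(3*ε^2)) * (2*t/(3*ε^2)) * t
          = deriv s ((t^2-ε^2)/(3*ε^2)) * (2*t^2/(3*ε^2)) := by ring
      rw [e, abs_mul]
      have h2 : |2*t^2/(3*ε^2)| ≤ 8/3 := by
        rw [abs_of_nonneg (by positivity), div_le_iff₀ (by positivity)]
        nlinarith [sq_abs t, abs_nonneg t]
      calc |deriv s ((t^2-ε^2)/(3*ε^2))| * |2*t^2/(3*ε^2)| ≤ B * (8/3) :=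
            mul_le_mul h1 h2 (abs_nonneg _) hB0.le
        _ = 8*B/3 := by ring
    · rw [hderiv t, smoothTransition_deriv_zero_ge_one (habs2 t (le_of_lt ht)), zero_mul, zero_mul]
      simp
      positivity

lemma integral_deriv_line_zero (f : ℝ → ℝ) (hf : Differentiable ℝ f)
    (hc : Continuous (deriv f)) (b : ℝ) (hb : 0 ≤ b) (h0 : ∀ t, b < |t| → f t = 0) :
    ∫ t : ℝ, deriv f t = 0 := by
  have hz : ∀ t, b < |t| → deriv f t = 0 := by
    intro t ht
    have hev : f =ᶠ[nhds t] fun _ => 0 := by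
      have hopen : IsOpen {s : ℝ | b < |s|} := isOpen_lt continuous_const continuous_abs
      filter_upwards [hopen.mem_nhds ht] with y hy
      exact h0 y hy
    rw [hev.deriv_eq]; simp
  have hind : deriv f = Set.indicator (Ioc (-(b+1)) (b+1)) (deriv f) := by
    funext t
    by_cases htt : t ∈ Ioc (-(b+1)) (b+1)
    · rw [Set.indicator_of_mem htt]
    · rw [Set.indicator_of_notMem htt]
      apply hz
      rw [Set.mem_Ioc, not_and_or] at htt
      rcases htt with h1 | h2
      · push_neg at h1
        calc b < b + 1 := by linarith
          _ ≤ -t := by linarith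
          _ ≤ |t| := neg_le_abs t
      · push_neg at h2
        calc b < b + 1 := by linarith
          _ < t := h2
          _ ≤ |t| := le_abs_self t
  rw [hind, MeasureTheory.integral_indicator measurableSet_Ioc,
    ← intervalIntegral.integral_of_le (by linarith : -(b+1) ≤ b+1),
    intervalIntegral.integral_deriv_eq_sub (fun x _ => hf x)
      (hc.intervalIntegrable _ _)]
  rw [h0 (b+1) (by rw [abs_of_nonneg] <;> linarith), h0 (-(b+1)) (by rw [abs_neg, abs_of_nonneg] <;> linarith)]
  simp

lemma abs_fst_le_sqrt (p : ℝ × ℝ) : |p.1| ≤ Real.sqrt (p.1^2 + p.2^2) := by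
  rw [← Real.sqrt_sq_eq_abs]
  exact Real.sqrt_le_sqrt (by nlinarith [sq_nonneg p.2])

lemma abs_snd_le_sqrt (p : ℝ × ℝ) : |p.2| ≤ Real.sqrt (p.1^2 + p.2^2) := by
  rw [← Real.sqrt_sq_eq_abs]
  exact Real.sqrt_le_sqrt (by nlinarith [sq_nonneg p.1])

lemma pdx_continuous {F : ℝ × ℝ → ℝ} (hF : ContDiff ℝ 1 F) : Continuous (pdx F) := by
  have he : pdx F = fun q => fderiv ℝ F q (1, 0) :=
    funext fun q => pdx_eq_fderiv (hF.differentiable one_ne_zero q)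
  rw [he]
  exact (ContinuousLinearMap.apply ℝ ℝ ((1:ℝ), (0:ℝ))).continuous.comp
    (hF.continuous_fderiv one_ne_zero)

lemma pdy_continuous {F : ℝ × ℝ → ℝ} (hF : ContDiff ℝ 1 F) : Continuous (pdy F) := by
  have he : pdy F = fun q => fderiv ℝ F q (0, 1) :=
    funext fun q => pdy_eq_fderiv (hF.differentiable one_ne_zero q)
  rw [he]
  exact (ContinuousLinearMap.apply ℝ ℝ ((0:ℝ), (1:ℝ))).continuous.comp
    (hF.continuous_fderiv one_ne_zero)

lemma integral_divergence_zero (F₁ F₂ : ℝ × ℝ → ℝ) (h₁ : ContDiff ℝ 1 F₁)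
    (h₂ : ContDiff ℝ 1 F₂) (b : ℝ) (hb : 0 ≤ b)
    (hs₁ : ∀ p : ℝ × ℝ, b < Real.sqrt (p.1^2 + p.2^2) → F₁ p = 0)
    (hs₂ : ∀ p : ℝ × ℝ, b < Real.sqrt (p.1^2 + p.2^2) → F₂ p = 0) :
    ∫ p : ℝ × ℝ, (pdx F₁ p + pdy F₂ p) = 0 := by
  have hKcl : IsClosed {p : ℝ × ℝ | Real.sqrt (p.1^2 + p.2^2) ≤ b} := by
    apply isClosed_le _ continuous_const
    apply Real.continuous_sqrt.comp
    fun_prop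
  have hKsub : {p : ℝ × ℝ | Real.sqrt (p.1^2 + p.2^2) ≤ b} ⊆ Icc (-b, -b) (b, b) := by
    intro p hp
    simp only [mem_setOf_eq] at hp
    have h1 := le_trans (abs_fst_le_sqrt p) hp
    have h2 := le_trans (abs_snd_le_sqrt p) hp
    rw [abs_le] at h1 h2
    constructor <;> constructor <;> simp [h1.1, h1.2, h2.1, h2.2]
  have hKcp : IsCompact {p : ℝ × ℝ | Real.sqrt (p.1^2 + p.2^2) ≤ b} :=
    IsCompact.of_isClosed_subset isCompact_Icc hKcl hKsub
  -- vanishing of partial derivatives outside K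
  have hz₁ : ∀ p : ℝ × ℝ, b < Real.sqrt (p.1^2 + p.2^2) → pdx F₁ p = 0 := by
    intro p hp
    apply pdx_const (c := 0)
    have hopen : IsOpen {q : ℝ × ℝ | b < Real.sqrt (q.1^2 + q.2^2)} := by
      apply isOpen_lt continuous_const
      apply Real.continuous_sqrt.comp; fun_prop
    filter_upwards [hopen.mem_nhds hp] with q hq
    exact hs₁ q hq
  have hz₂ : ∀ p : ℝ × ℝ, b < Real.sqrt (p.1^2 + p.2^2) → pdy F₂ p = 0 := by
    intro p hp
    apply pdy_const (c := 0)
    have hopen : IsOpen {q : ℝ × ℝ | b < Real.sqrt (q.1^2 + q.2^2)} := by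
      apply isOpen_lt continuous_const
      apply Real.continuous_sqrt.comp; fun_prop
    filter_upwards [hopen.mem_nhds hp] with q hq
    exact hs₂ q hq
  have hc₁ : Continuous (pdx F₁) := pdx_continuous h₁
  have hc₂ : Continuous (pdy F₂) := pdy_continuous h₂
  have hcs₁ : HasCompactSupport (pdx F₁) := by
    apply HasCompactSupport.of_support_subset_isCompact hKcp
    intro p hp
    simp only [Function.mem_support] at hp
    by_contra hpb
    simp only [mem_setOf_eq, not_le] at hpb
    exact hp (hz₁ p hpb)
  have hcs₂ : HasCompactSupport (pdy F₂) := by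
    apply HasCompactSupport.of_support_subset_isCompact hKcp
    intro p hp
    simp only [Function.mem_support] at hp
    by_contra hpb
    simp only [mem_setOf_eq, not_le] at hpb
    exact hp (hz₂ p hpb)
  have hint₁ : MeasureTheory.Integrable (pdx F₁) := hc₁.integrable_of_hasCompactSupport hcs₁
  have hint₂ : MeasureTheory.Integrable (pdy F₂) := hc₂.integrable_of_hasCompactSupport hcs₂
  rw [MeasureTheory.integral_add hint₁ hint₂]
  have e₁ : ∫ p : ℝ × ℝ, pdx F₁ p = 0 := by
    rw [MeasureTheory.Measure.volume_eq_prod] at hint₁ ⊢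
    rw [MeasureTheory.integral_prod_symm _ hint₁]
    have : ∀ y : ℝ, ∫ x : ℝ, pdx F₁ (x, y) = 0 := by
      intro y
      have hfd : Differentiable ℝ (fun x : ℝ => F₁ (x, y)) := by
        intro x
        exact sliceX_differentiableAt (p := (x, y)) (h₁.differentiable one_ne_zero _)
      have hde : deriv (fun x : ℝ => F₁ (x, y)) = fun x => pdx F₁ (x, y) := rfl
      have := integral_deriv_line_zero (fun x : ℝ => F₁ (x, y)) hfd
        (by rw [hde]; exact hc₁.comp (by fun_prop)) b hb
        (fun t ht => hs₁ (t, y) (lt_of_lt_of_le ht (abs_fst_le_sqrt (t, y))))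
      rw [hde] at this
      exact this
    rw [funext this]
    simp
  have e₂ : ∫ p : ℝ × ℝ, pdy F₂ p = 0 := by
    rw [MeasureTheory.Measure.volume_eq_prod] at hint₂ ⊢
    rw [MeasureTheory.integral_prod _ hint₂]
    have : ∀ x : ℝ, ∫ y : ℝ, pdy F₂ (x, y) = 0 := by
      intro x
      have hfd : Differentiable ℝ (fun y : ℝ => F₂ (x, y)) := by
        intro y
        exact sliceY_differentiableAt (p := (x, y)) (h₂.differentiable one_ne_zero _)
      have hde : deriv (fun y : ℝ => F₂ (x, y)) = fun y => pdy F₂ (x, y) := rfl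
      have := integral_deriv_line_zero (fun y : ℝ => F₂ (x, y)) hfd
        (by rw [hde]; exact hc₂.comp (by fun_prop)) b hb
        (fun t ht => hs₂ (x, t) (lt_of_lt_of_le ht (abs_snd_le_sqrt (x, t))))
      rw [hde] at this
      exact this
    rw [funext this]
    simp
  rw [e₁, e₂]; simp

lemma indicator_eventually_zero {Ω : Set (ℝ × ℝ)} (hΩ : IsOpen Ω) {φ : ℝ × ℝ → ℝ}
    (hφc : ContinuousOn φ (closure Ω)) (hbd : ∀ p ∈ frontier Ω, φ p = 0)
    {ε : ℝ} (hε : 0 < ε) {κ : ℝ → ℝ} (hκ : ∀ t, |t| ≤ ε → κ t = 0) (G : ℝ × ℝ → ℝ)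
    {p : ℝ × ℝ} (hp : p ∉ Ω) :
    Ω.indicator (fun q => κ (φ q) * G q) =ᶠ[nhds p] (fun _ => (0:ℝ)) := by
  by_cases hpc : p ∈ closure Ω
  · have hpf : p ∈ frontier Ω := by
      rw [frontier_eq_closure_inter_closure]
      exact ⟨hpc, subset_closure hp⟩
    have hφp : φ p = 0 := hbd p hpf
    have hcont : ContinuousWithinAt φ (closure Ω) p := hφc p hpc
    have hmem : {y : ℝ | |y| < ε} ∈ nhds (φ p) := by
      rw [hφp]
      exact (isOpen_lt continuous_abs continuous_const).mem_nhds (by simpa using hε)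
    have hpre := hcont hmem
    rw [Filter.mem_map, mem_nhdsWithin] at hpre
    obtain ⟨t, hto, hpt, hts⟩ := hpre
    filter_upwards [hto.mem_nhds hpt] with q hq
    by_cases hqΩ : q ∈ Ω
    · rw [Set.indicator_of_mem hqΩ]
      have : |φ q| < ε := hts ⟨hq, subset_closure hqΩ⟩
      rw [hκ (φ q) this.le, zero_mul]
    · rw [Set.indicator_of_notMem hqΩ]
  · have hopen : IsOpen (closure Ω)ᶜ := isClosed_closure.isOpen_compl
    filter_upwards [hopen.mem_nhds hpc] with q hq
    have : q ∉ Ω := fun hqΩ => hq (subset_closure hqΩ)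
    rw [Set.indicator_of_notMem this]

lemma indicator_contDiff {Ω : Set (ℝ × ℝ)} (hΩ : IsOpen Ω) {φ : ℝ × ℝ → ℝ}
    (hφc : ContinuousOn φ (closure Ω)) (hbd : ∀ p ∈ frontier Ω, φ p = 0)
    {ε : ℝ} (hε : 0 < ε) {κ : ℝ → ℝ} (hκ : ∀ t, |t| ≤ ε → κ t = 0) {G : ℝ × ℝ → ℝ}
    (hG : ∀ p ∈ Ω, ContDiffAt ℝ 1 (fun q => κ (φ q) * G q) p) :
    ContDiff ℝ 1 (Ω.indicator (fun q => κ (φ q) * G q)) := by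
  rw [contDiff_iff_contDiffAt]
  intro p
  by_cases hp : p ∈ Ω
  · apply (hG p hp).congr_of_eventuallyEq
    filter_upwards [hΩ.mem_nhds hp] with q hq
    rw [Set.indicator_of_mem hq]
  · exact contDiffAt_const.congr_of_eventuallyEq
      (indicator_eventually_zero hΩ hφc hbd hε hκ G hp)

lemma indicator_continuous {Ω : Set (ℝ × ℝ)} (hΩ : IsOpen Ω) {φ : ℝ × ℝ → ℝ}
    (hφc : ContinuousOn φ (closure Ω)) (hbd : ∀ p ∈ frontier Ω, φ p = 0)
    {ε : ℝ} (hε : 0 < ε) {κ : ℝ → ℝ} (hκ : ∀ t, |t| ≤ ε → κ t = 0) {G : ℝ × ℝ → ℝ}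
    (hG : ∀ p ∈ Ω, ContinuousAt (fun q => κ (φ q) * G q) p) :
    Continuous (Ω.indicator (fun q => κ (φ q) * G q)) := by
  rw [continuous_iff_continuousAt]
  intro p
  by_cases hp : p ∈ Ω
  · apply (hG p hp).congr
    filter_upwards [hΩ.mem_nhds hp] with q hq
    rw [Set.indicator_of_mem hq]
  · exact continuousAt_const.congr
      ((indicator_eventually_zero hΩ hφc hbd hε hκ G hp).symm)

lemma grad_bound {Ω : Set (ℝ × ℝ)} (hΩ : IsOpen Ω) {φ : ℝ × ℝ → ℝ}
    (hφ : ContDiffOn ℝ 2 φ (closure Ω)) (r : ℝ) :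
    ∃ M : ℝ, 0 ≤ M ∧ ∀ p ∈ Ω, Real.sqrt (p.1^2 + p.2^2) ≤ r →
      (pdx φ p)^2 + (pdy φ p)^2 ≤ M := by
  classical
  have hloc : ∀ x ∈ closure Ω, ∃ V : Set (ℝ × ℝ), V ∈ nhds x ∧ ∃ Mx : ℝ,
      ∀ y ∈ V ∩ Ω, (pdx φ y)^2 + (pdy φ y)^2 ≤ Mx := by
    intro x hx
    have hcd : ContDiffWithinAt ℝ 2 φ (closure Ω) x := hφ x hx
    obtain ⟨u, hu, q, hq⟩ := hcd 1 (by norm_num)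
    rw [insert_eq_of_mem hx] at hu
    have hxu : x ∈ u := mem_of_mem_nhdsWithin hx hu
    rw [mem_nhdsWithin] at hu
    obtain ⟨t, hto, hxt, hts⟩ := hu
    have hcont : ContinuousOn (fun y => q y 1) u := hq.cont 1 le_rfl
    have hmem : {z : ContinuousMultilinearMap ℝ (fun _ : Fin 1 => ℝ × ℝ) ℝ | ‖z‖ < ‖q x 1‖ + 1}
        ∈ nhds (q x 1) := by
      exact (isOpen_lt continuous_norm continuous_const).mem_nhds (by simp)
    have hpre := (hcont x hxu) hmem
    rw [Filter.mem_map, mem_nhdsWithin] at hpre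
    obtain ⟨t₂, ht₂o, hxt₂, ht₂s⟩ := hpre
    refine ⟨t ∩ t₂, (hto.inter ht₂o).mem_nhds ⟨hxt, hxt₂⟩, 2 * (‖q x 1‖ + 1)^2, ?_⟩
    rintro y ⟨⟨hyt, hyt₂⟩, hyΩ⟩
    have hyu : y ∈ u := hts ⟨hyt, subset_closure hyΩ⟩
    have hnb : ‖q y 1‖ < ‖q x 1‖ + 1 := ht₂s ⟨hyt₂, hyu⟩
    have hunhd : u ∈ nhds y := by
      apply Filter.mem_of_superset ((hto.inter hΩ).mem_nhds ⟨hyt, hyΩ⟩)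
      intro z hz
      exact hts ⟨hz.1, subset_closure hz.2⟩
    have hfd : HasFDerivAt φ (continuousMultilinearCurryFin1 ℝ (ℝ × ℝ) ℝ (q y 1)) y :=
      (hq.hasFDerivWithinAt (by simp) hyu).hasFDerivAt hunhd
    have hnorm : ‖continuousMultilinearCurryFin1 ℝ (ℝ × ℝ) ℝ (q y 1)‖ = ‖q y 1‖ :=
      LinearIsometryEquiv.norm_map _ _
    have hdiff : DifferentiableAt ℝ φ y := hfd.differentiableAt
    have hx1 : |pdx φ y| ≤ ‖q y 1‖ := by
      rw [pdx_eq_fderiv hdiff, hfd.fderiv]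
      calc |continuousMultilinearCurryFin1 ℝ (ℝ × ℝ) ℝ (q y 1) ((1:ℝ), (0:ℝ))|
          = ‖continuousMultilinearCurryFin1 ℝ (ℝ × ℝ) ℝ (q y 1) ((1:ℝ), (0:ℝ))‖ :=
            (Real.norm_eq_abs _).symm
        _ ≤ ‖continuousMultilinearCurryFin1 ℝ (ℝ × ℝ) ℝ (q y 1)‖ * ‖((1:ℝ), (0:ℝ))‖ :=
            ContinuousLinearMap.le_opNorm _ _
        _ = ‖q y 1‖ := by
            rw [hnorm]
            have hn1 : ‖((1:ℝ), (0:ℝ))‖ = 1 := by simp [Prod.norm_def]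
            rw [hn1, mul_one]
    have hy1 : |pdy φ y| ≤ ‖q y 1‖ := by
      rw [pdy_eq_fderiv hdiff, hfd.fderiv]
      calc |continuousMultilinearCurryFin1 ℝ (ℝ × ℝ) ℝ (q y 1) ((0:ℝ), (1:ℝ))|
          = ‖continuousMultilinearCurryFin1 ℝ (ℝ × ℝ) ℝ (q y 1) ((0:ℝ), (1:ℝ))‖ :=
            (Real.norm_eq_abs _).symm
        _ ≤ ‖continuousMultilinearCurryFin1 ℝ (ℝ × ℝ) ℝ (q y 1)‖ * ‖((0:ℝ), (1:ℝ))‖ :=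
            ContinuousLinearMap.le_opNorm _ _
        _ = ‖q y 1‖ := by
            rw [hnorm]
            have hn1 : ‖((0:ℝ), (1:ℝ))‖ = 1 := by simp [Prod.norm_def]
            rw [hn1, mul_one]
    have h1 : (pdx φ y)^2 ≤ (‖q x 1‖ + 1)^2 := by
      rw [← sq_abs]
      apply pow_le_pow_left₀ (abs_nonneg _) (le_trans hx1 hnb.le)
    have h2 : (pdy φ y)^2 ≤ (‖q x 1‖ + 1)^2 := by
      rw [← sq_abs]
      apply pow_le_pow_left₀ (abs_nonneg _) (le_trans hy1 hnb.le)
    linarith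
  set K := closure Ω ∩ {p : ℝ × ℝ | Real.sqrt (p.1^2 + p.2^2) ≤ r} with hK
  have hKcl : IsClosed {p : ℝ × ℝ | Real.sqrt (p.1^2 + p.2^2) ≤ r} := by
    apply isClosed_le _ continuous_const
    apply Real.continuous_sqrt.comp; fun_prop
  have hKsub : K ⊆ Icc (-r, -r) (r, r) := by
    rintro p ⟨-, hp⟩
    simp only [mem_setOf_eq] at hp
    have h1 := le_trans (abs_fst_le_sqrt p) hp
    have h2 := le_trans (abs_snd_le_sqrt p) hp
    rw [abs_le] at h1 h2
    constructor <;> constructor <;> simp [h1.1, h1.2, h2.1, h2.2]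
  have hKcp : IsCompact K :=
    IsCompact.of_isClosed_subset isCompact_Icc (isClosed_closure.inter hKcl) hKsub
  set U : ℝ × ℝ → Set (ℝ × ℝ) := fun x =>
    if hx : x ∈ closure Ω then (hloc x hx).choose else univ with hU
  set Mf : ℝ × ℝ → ℝ := fun x =>
    if hx : x ∈ closure Ω then (hloc x hx).choose_spec.2.choose else 0 with hMf
  have hUnhds : ∀ x ∈ K, U x ∈ nhds x := by
    intro x hx
    rw [hU]
    simp only
    rw [dif_pos hx.1]
    exact (hloc x hx.1).choose_spec.1
  have hUbd : ∀ x, x ∈ closure Ω → ∀ y ∈ U x ∩ Ω, (pdx φ y)^2 + (pdy φ y)^2 ≤ Mf x := by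
    intro x hx
    rw [hU, hMf]
    simp only
    rw [dif_pos hx, dif_pos hx]
    exact (hloc x hx).choose_spec.2.choose_spec
  obtain ⟨s, hs₁, hs₂⟩ := hKcp.elim_nhds_subcover U hUnhds
  refine ⟨∑ x ∈ s, |Mf x|, Finset.sum_nonneg (fun x _ => abs_nonneg _), ?_⟩
  intro p hpΩ hpr
  have hpK : p ∈ K := ⟨subset_closure hpΩ, hpr⟩
  obtain ⟨x, hxs, hpU⟩ := mem_iUnion₂.1 (hs₂ hpK)
  have hb := hUbd x (hs₁ x hxs).1 p ⟨hpU, hpΩ⟩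
  calc (pdx φ p)^2 + (pdy φ p)^2 ≤ Mf x := hb
    _ ≤ |Mf x| := le_abs_self _
    _ ≤ ∑ x ∈ s, |Mf x| := Finset.single_le_sum (fun i _ => abs_nonneg (Mf i)) hxs

set_option maxHeartbeats 1600000 in
/-- Ghoussoub–Gui logarithmic cutoff argument: if `div(ψ²∇(φ/ψ)) = 0`
on `Ω`, `φ` vanishes on `∂Ω`, is bounded and tends to `0` at infinity, and cutoffs
`ζ_R` with `|∇ζ_R| ≤ C/R` exist, then `∫_Ω |∇(φ/ψ)|² ψ² = 0`, hence `φ/ψ` is locally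
constant on `Ω`. -/
theorem ghoussoub_gui_liouville
    (Ω : Set (ℝ × ℝ)) (hΩ : IsOpen Ω)
    (ψ φ : ℝ × ℝ → ℝ)
    (hψ : ContDiffOn ℝ 2 ψ Ω) (hφ : ContDiffOn ℝ 2 φ (closure Ω))
    (hψpos : ∀ p ∈ Ω, 0 < ψ p)
    (h : ℝ × ℝ → ℝ) (hdef : ∀ p, h p = φ p / ψ p)
    (hdiv : ∀ p ∈ Ω,
      pdx (fun q => ψ q ^ 2 * pdx h q) p + pdy (fun q => ψ q ^ 2 * pdy h q) p = 0)
    (hbd : ∀ p ∈ frontier Ω, φ p = 0)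
    (hφbdd : ∃ M : ℝ, ∀ p ∈ Ω, |φ p| ≤ M)
    (hφ0 : ∀ ε > (0:ℝ), ∃ R : ℝ, ∀ p ∈ Ω, R ≤ Real.sqrt (p.1 ^ 2 + p.2 ^ 2) → |φ p| ≤ ε)
    (C : ℝ) (hC : 0 < C)
    (hcut : ∀ R ≥ (1:ℝ), ∃ ζ : ℝ × ℝ → ℝ, ContDiff ℝ 1 ζ ∧
      (∀ p : ℝ × ℝ, Real.sqrt (p.1 ^ 2 + p.2 ^ 2) ≤ R → ζ p = 1) ∧
      (∀ p : ℝ × ℝ, 2 * R ≤ Real.sqrt (p.1 ^ 2 + p.2 ^ 2) → ζ p = 0) ∧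
      (∀ p : ℝ × ℝ, Real.sqrt ((pdx ζ p) ^ 2 + (pdy ζ p) ^ 2) ≤ C / R)) :
    (∫ p in Ω, ((pdx h p) ^ 2 + (pdy h p) ^ 2) * ψ p ^ 2) = 0 ∧
    ∀ p ∈ Ω, pdx h p = 0 ∧ pdy h p = 0 := by
  classical
  -- base regularity facts
  have hφcont : ContinuousOn φ (closure Ω) := hφ.continuousOn
  have hψA : ∀ p ∈ Ω, ContDiffAt ℝ 2 ψ p := fun p hp => hψ.contDiffAt (hΩ.mem_nhds hp)
  have hφA : ∀ p ∈ Ω, ContDiffAt ℝ 2 φ p := fun p hp =>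
    hφ.contDiffAt (Filter.mem_of_superset (hΩ.mem_nhds hp) subset_closure)
  have hhA : ∀ p ∈ Ω, ContDiffAt ℝ 2 h p := by
    intro p hp
    have : ContDiffAt ℝ 2 (fun q => φ q / ψ q) p :=
      (hφA p hp).div (hψA p hp) (ne_of_gt (hψpos p hp))
    apply this.congr_of_eventuallyEq
    filter_upwards with q
    rw [hdef q]
  have huA : ∀ p ∈ Ω, ContDiffAt ℝ 1 (pdx h) p := fun p hp => contDiffAt_pdx (hhA p hp)
  have hvA : ∀ p ∈ Ω, ContDiffAt ℝ 1 (pdy h) p := fun p hp => contDiffAt_pdy (hhA p hp)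
  have hψh : ∀ p ∈ Ω, h p * ψ p ^ 2 = φ p * ψ p := by
    intro p hp
    rw [hdef p]
    have hne := ne_of_gt (hψpos p hp)
    field_simp
  -- the key pointwise statement
  have key : ∀ p ∈ Ω, pdx h p = 0 ∧ pdy h p = 0 := by
    intro p₀ hp₀
    by_contra hcon
    have ha : 0 < (pdx h p₀)^2 + (pdy h p₀)^2 := by
      rcases not_and_or.1 hcon with hx | hy
      · have : 0 < (pdx h p₀)^2 := by positivity
        nlinarith [sq_nonneg (pdy h p₀)]
      · have : 0 < (pdy h p₀)^2 := by positivity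
        nlinarith [sq_nonneg (pdx h p₀)]
    set u := pdx h with hu
    set v := pdy h with hv
    set A : ℝ × ℝ → ℝ := fun q => (u q^2 + v q^2) * ψ q^2 with hA
    have ha' : 0 < A p₀ := by
      have := hψpos p₀ hp₀
      have h2 : 0 < ψ p₀^2 := by positivity
      exact mul_pos ha h2
    have hAc : ContinuousAt A p₀ := by
      apply ContinuousAt.mul
      · exact (((huA p₀ hp₀).continuousAt.pow 2).add ((hvA p₀ hp₀).continuousAt.pow 2))
      · exact ((hψA p₀ hp₀).continuousAt.pow 2)
    -- find a ball where A > A p₀ / 2 inside Ω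
    have hev : ∀ᶠ q in nhds p₀, A q > A p₀ / 2 ∧ q ∈ Ω := by
      have h1 : ∀ᶠ q in nhds p₀, A q > A p₀ / 2 := by
        have : {x : ℝ | A p₀ / 2 < x} ∈ nhds (A p₀) :=
          (isOpen_lt continuous_const continuous_id).mem_nhds (by simpa using by linarith)
        exact hAc.preimage_mem_nhds this
      exact h1.and (hΩ.mem_nhds hp₀)
    obtain ⟨δ, hδ0, hδ⟩ := Metric.eventually_nhds_iff_ball.1 hev
    set m := A p₀ / 2 with hm
    have hm0 : 0 < m := by positivity
    -- find p₁ near p₀ where φ ≠ 0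
    have hp₁ex : ∃ p₁ ∈ Metric.ball p₀ (δ/2), φ p₁ ≠ 0 := by
      by_contra hno
      push_neg at hno
      have hev0 : h =ᶠ[nhds p₀] fun _ => (0:ℝ) := by
        filter_upwards [Metric.ball_mem_nhds p₀ (by positivity : (0:ℝ) < δ/2)] with q hq
        rw [hdef q, hno q hq, zero_div]
      have h1 : u p₀ = 0 := pdx_const hev0
      have h2 : v p₀ = 0 := pdy_const hev0
      exact hcon ⟨h1, h2⟩
    obtain ⟨p₁, hp₁b, hφp₁⟩ := hp₁ex
    have hp₁Ω : p₁ ∈ Ω := by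
      have := hδ p₁ (Metric.mem_ball.2 (lt_trans (Metric.mem_ball.1 hp₁b) (by linarith)))
      exact this.2
    set a₀ := |φ p₁| / 2 with ha₀
    have ha₀0 : 0 < a₀ := by
      have : 0 < |φ p₁| := abs_pos.2 hφp₁
      positivity
    -- small ball around p₁ where |φ| > a₀
    have hφev : ∀ᶠ q in nhds p₁, |φ q| > a₀ := by
      have hc : ContinuousAt (fun q => |φ q|) p₁ := ((hφA p₁ hp₁Ω).continuousAt).abs
      have : {x : ℝ | a₀ < x} ∈ nhds (|φ p₁|) := by
        apply (isOpen_lt continuous_const continuous_id).mem_nhds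
        show a₀ < |φ p₁|
        rw [ha₀]
        linarith [abs_pos.2 hφp₁]
      exact hc.preimage_mem_nhds this
    obtain ⟨ρ₁, hρ₁0, hρ₁⟩ := Metric.eventually_nhds_iff_ball.1 hφev
    set ρ := min (ρ₁/2) (δ/4) with hρ
    have hρ0 : 0 < ρ := by positivity
    have hballs : ∀ q ∈ Metric.ball p₁ ρ, q ∈ Ω ∧ A q > m ∧ |φ q| > a₀ := by
      intro q hq
      have hq1 : q ∈ Metric.ball p₁ ρ₁ := by
        apply Metric.mem_ball.2
        calc dist q p₁ < ρ := Metric.mem_ball.1 hq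
          _ ≤ ρ₁/2 := min_le_left _ _
          _ < ρ₁ := by linarith
      have hq0 : q ∈ Metric.ball p₀ δ := by
        apply Metric.mem_ball.2
        calc dist q p₀ ≤ dist q p₁ + dist p₁ p₀ := dist_triangle _ _ _
          _ < ρ + δ/2 := add_lt_add (Metric.mem_ball.1 hq) (Metric.mem_ball.1 hp₁b)
          _ ≤ δ/4 + δ/2 := by have := min_le_right (ρ₁/2) (δ/4); linarith
          _ < δ := by linarith
      exact ⟨(hδ q hq0).2, (hδ q hq0).1, hρ₁ q hq1⟩
    -- cutoff machinery in the value of φ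
    obtain ⟨c₀, hc₀0, hχall⟩ := exists_chi
    -- choose ε' and R
    set ε' := Real.sqrt m * ρ / (16*C) with hε'
    have hε'0 : 0 < ε' := by
      have := Real.sqrt_pos.2 hm0
      positivity
    obtain ⟨R₀, hR₀⟩ := hφ0 ε' hε'0
    set R := max 1 (max R₀ (Real.sqrt (p₁.1^2 + p₁.2^2) + 2*ρ + 1)) with hR
    have hR1 : (1:ℝ) ≤ R := le_max_left _ _
    have hR0 : (0:ℝ) < R := by linarith
    have hRR₀ : R₀ ≤ R := le_trans (le_max_left _ _) (le_max_right _ _)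
    have hRp₁ : Real.sqrt (p₁.1^2 + p₁.2^2) + 2*ρ + 1 ≤ R :=
      le_trans (le_max_right _ _) (le_max_right _ _)
    obtain ⟨ζ, hζ1, hζin, hζout, hζgrad⟩ := hcut R hR1
    -- bound for ζ^2 on the closed region sqrt ≤ 2R
    have hScl : IsClosed {p : ℝ × ℝ | Real.sqrt (p.1^2 + p.2^2) ≤ 2*R} := by
      apply isClosed_le _ continuous_const
      apply Real.continuous_sqrt.comp; fun_prop
    have hScp : IsCompact {p : ℝ × ℝ | Real.sqrt (p.1^2 + p.2^2) ≤ 2*R} := by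
      apply IsCompact.of_isClosed_subset (isCompact_Icc (a := (-(2*R), -(2*R))) (b := (2*R, 2*R))) hScl
      intro p hp
      simp only [mem_setOf_eq] at hp
      have h1 := le_trans (abs_fst_le_sqrt p) hp
      have h2 := le_trans (abs_snd_le_sqrt p) hp
      rw [abs_le] at h1 h2
      constructor <;> constructor <;> simp [h1.1, h1.2, h2.1, h2.2]
    obtain ⟨Bζ', hBζ'⟩ := hScp.exists_bound_of_continuousOn ((hζ1.continuous.pow 2).continuousOn)
    set Bζ := max Bζ' 0 with hBζdef
    have hBζ0 : 0 ≤ Bζ := le_max_right _ _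
    have hBζ : ∀ p : ℝ × ℝ, Real.sqrt (p.1^2 + p.2^2) ≤ 2*R → (ζ p)^2 ≤ Bζ := by
      intro p hp
      calc (ζ p)^2 ≤ |(ζ p)^2| := le_abs_self _
        _ = ‖(ζ p)^2‖ := (Real.norm_eq_abs _).symm
        _ ≤ Bζ' := hBζ' p hp
        _ ≤ Bζ := le_max_left _ _
    -- gradient bound for φ
    obtain ⟨Mg, hMg0, hMg⟩ := grad_bound hΩ hφ (2*R)
    -- the exceptional sets
    set Sbox := {p : ℝ × ℝ | Real.sqrt (p.1^2 + p.2^2) ≤ 2*R} with hSbox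
    set En : ℕ → Set (ℝ × ℝ) := fun n =>
      ({p ∈ Ω | φ p ≠ 0} \ {p ∈ Ω | 2/(n+1) < |φ p|}) ∩ Sbox with hEn
    have hEnmeas : ∀ n, MeasurableSet (En n) := by
      intro n
      have ho1 : IsOpen {p ∈ Ω | φ p ≠ 0} := by
        have : {p ∈ Ω | φ p ≠ 0} = Ω ∩ φ ⁻¹' ({0}ᶜ) := by ext q; simp [mem_setOf_eq]
        rw [this]
        exact ContinuousOn.isOpen_inter_preimage
          (fun q hq => (hφA q hq).continuousAt.continuousWithinAt) hΩ isOpen_compl_singleton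
      have ho2 : IsOpen {p ∈ Ω | 2/(n+1) < |φ p|} := by
        have : {p ∈ Ω | 2/(n+1) < |φ p|} = Ω ∩ φ ⁻¹' ({t : ℝ | 2/(n+1) < |t|}) := by
          ext q; simp [mem_setOf_eq]
        rw [this]
        exact ContinuousOn.isOpen_inter_preimage
          (fun q hq => (hφA q hq).continuousAt.continuousWithinAt) hΩ
          (isOpen_lt continuous_const continuous_abs)
      exact ((ho1.measurableSet.diff ho2.measurableSet).inter hScl.measurableSet)
    have hEnanti : Antitone En := by
      intro n₁ n₂ hn12
      apply inter_subset_inter _ (subset_refl _)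
      apply diff_subset_diff (subset_refl _)
      intro q hq
      simp only [mem_setOf_eq] at hq ⊢
      refine ⟨hq.1, lt_of_le_of_lt ?_ hq.2⟩
      apply div_le_div_of_nonneg_left (by norm_num) (by positivity)
      have := (Nat.cast_le (α := ℝ)).2 hn12; linarith
    have hEnempty : (⋂ n, En n) = ∅ := by
      ext q
      simp only [mem_iInter, mem_empty_iff_false, iff_false, not_forall]
      by_contra hq
      push_neg at hq
      have h0 := hq 0
      rw [hEn] at h0
      have hqφ : φ q ≠ 0 := h0.1.1.2
      obtain ⟨n, hn⟩ := exists_nat_gt (2/|φ q|)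
      have hn2 := hq n
      rw [hEn] at hn2
      have h1 : ¬ (2/(n+1) < |φ q|) := fun hcon2 => hn2.1.2 ⟨hn2.1.1.1, hcon2⟩
      push_neg at h1
      have hqa : 0 < |φ q| := abs_pos.2 hqφ
      have h2 : 2/|φ q| < n + 1 := by linarith
      rw [div_lt_iff₀ hqa] at h2
      rw [le_div_iff₀ (by positivity : (0:ℝ) < n+1)] at h1
      nlinarith
    have hEnfin : MeasureTheory.volume (En 0) ≠ ⊤ := by
      apply ne_of_lt
      calc MeasureTheory.volume (En 0) ≤ MeasureTheory.volume Sbox :=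
            measure_mono (inter_subset_right)
        _ ≤ MeasureTheory.volume (Icc ((-(2*R), -(2*R)) : ℝ × ℝ) ((2*R, 2*R) : ℝ × ℝ)) := by
            apply measure_mono
            intro p hp
            simp only [hSbox, mem_setOf_eq] at hp
            have h1 := le_trans (abs_fst_le_sqrt p) hp
            have h2 := le_trans (abs_snd_le_sqrt p) hp
            rw [abs_le] at h1 h2
            constructor <;> constructor <;> simp [h1.1, h1.2, h2.1, h2.2]
        _ < ⊤ := by
            rw [Icc_prod_eq, MeasureTheory.Measure.volume_eq_prod,
              MeasureTheory.Measure.prod_prod]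
            simp only [Real.volume_Icc]
            exact ENNReal.mul_lt_top ENNReal.ofReal_lt_top ENNReal.ofReal_lt_top
    set κZ := 4*c₀^2*Bζ*Mg with hκZ
    have hκZ0 : 0 ≤ κZ := by positivity
    have htend : Filter.Tendsto (fun n => MeasureTheory.volume (En n)) Filter.atTop
        (nhds 0) := by
      have := MeasureTheory.tendsto_measure_iInter_atTop
        (fun n => (hEnmeas n).nullMeasurableSet) hEnanti ⟨0, hEnfin⟩
      rw [hEnempty] at this
      simpa [Function.comp_def] using this
    have hev1 : ∀ᶠ n : ℕ in Filter.atTop,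
        MeasureTheory.volume (En n) < ENNReal.ofReal (m*ρ^2/(κZ+1)) := by
      apply htend.eventually_lt_const
      apply ENNReal.ofReal_pos.2
      positivity
    have hev2 : ∀ᶠ n : ℕ in Filter.atTop, (2:ℝ)/(n+1) ≤ a₀ := by
      have h2n : Filter.Tendsto (fun n : ℕ => (2:ℝ)/(n+1)) Filter.atTop (nhds 0) := by
        have := tendsto_one_div_add_atTop_nhds_zero_nat (𝕜 := ℝ)
        have h22 := this.const_mul (2:ℝ)
        simp only [mul_zero] at h22
        apply h22.congr
        intro n
        rw [mul_one_div]
      filter_upwards [h2n.eventually (eventually_le_nhds ha₀0)] with n hn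
      exact hn
    obtain ⟨n, hn1, hn2⟩ := (hev1.and hev2).exists
    set ε := (1:ℝ)/(n+1) with hεdef
    have hε0 : 0 < ε := by positivity
    have h2ε : 2*ε = 2/(n+1) := by rw [hεdef]; ring
    obtain ⟨χ, hχc, hχ0, hχ1, hχz, hχone, hχdz, hχdz2, hχdb⟩ := hχall ε hε0
    -- ============ definitions of the main auxiliary functions ============
    have hχcd : Continuous (deriv χ) := hχc.continuous_deriv (by exact_mod_cast le_top)
    set κχ : ℝ → ℝ := fun t => (χ t)^2 with hκχ
    set κT2 : ℝ → ℝ := fun t => χ t * deriv χ t with hκT2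
    set κZf : ℝ → ℝ := fun t => (deriv χ t * t)^2 with hκZf
    have hκχz : ∀ t, |t| ≤ ε → κχ t = 0 := by
      intro t ht; rw [hκχ]; simp only; rw [hχz t ht]; ring
    have hκT2z : ∀ t, |t| ≤ ε → κT2 t = 0 := by
      intro t ht; rw [hκT2]; simp only; rw [hχz t ht]; ring
    have hκZfz : ∀ t, |t| ≤ ε → κZf t = 0 := by
      intro t ht; rw [hκZf]; simp only; rw [hχdz t ht]; ring
    set G1 : ℝ × ℝ → ℝ := fun q => ζ q^2 * h q * (ψ q^2 * u q) with hG1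
    set G2 : ℝ × ℝ → ℝ := fun q => ζ q^2 * h q * (ψ q^2 * v q) with hG2
    set t1G : ℝ × ℝ → ℝ := fun q => 2 * ζ q * h q * ψ q^2 * (pdx ζ q * u q + pdy ζ q * v q) with ht1G
    set t2G : ℝ × ℝ → ℝ := fun q => 2 * ζ q^2 * h q * ψ q^2 * (pdx φ q * u q + pdy φ q * v q) with ht2G
    set t3G : ℝ × ℝ → ℝ := fun q => ζ q^2 * ψ q^2 * (u q^2 + v q^2) with ht3G
    set wG : ℝ × ℝ → ℝ := fun q => φ q^2 * (pdx ζ q^2 + pdy ζ q^2) with hwG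
    set zG : ℝ × ℝ → ℝ := fun q => 4 * ζ q^2 * (pdx φ q^2 + pdy φ q^2) with hzG
    set F₁ : ℝ × ℝ → ℝ := Ω.indicator (fun q => κχ (φ q) * G1 q) with hF₁
    set F₂ : ℝ × ℝ → ℝ := Ω.indicator (fun q => κχ (φ q) * G2 q) with hF₂
    set T1 : ℝ × ℝ → ℝ := Ω.indicator (fun q => κχ (φ q) * t1G q) with hT1
    set T2 : ℝ × ℝ → ℝ := Ω.indicator (fun q => κT2 (φ q) * t2G q) with hT2
    set T3 : ℝ × ℝ → ℝ := Ω.indicator (fun q => κχ (φ q) * t3G q) with hT3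
    set W : ℝ × ℝ → ℝ := Ω.indicator (fun q => κχ (φ q) * wG q) with hW
    set Z : ℝ × ℝ → ℝ := Ω.indicator (fun q => κZf (φ q) * zG q) with hZ
    -- ============ continuity and differentiability ============
    have hζdiff : ∀ q : ℝ × ℝ, DifferentiableAt ℝ ζ q := fun q => hζ1.differentiable one_ne_zero q
    have hζxc : Continuous (pdx ζ) := pdx_continuous hζ1
    have hζyc : Continuous (pdy ζ) := pdy_continuous hζ1
    have hφxc : ∀ q ∈ Ω, ContinuousAt (pdx φ) q := fun q hq => (contDiffAt_pdx (hφA q hq)).continuousAt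
    have hφyc : ∀ q ∈ Ω, ContinuousAt (pdy φ) q := fun q hq => (contDiffAt_pdy (hφA q hq)).continuousAt
    have hκχcd := hχc.pow 2
    have hκT2c : Continuous κT2 := (hχc.continuous).mul hχcd
    have hκZfc : Continuous κZf := ((hχcd.mul continuous_id).pow 2)
    -- ContDiff of F₁ and F₂
    have hF₁cd : ContDiff ℝ 1 F₁ := by
      rw [hF₁]
      apply indicator_contDiff hΩ hφcont hbd hε0 hκχz
      intro q hq
      have l1 : ContDiffAt ℝ 1 (fun p : ℝ × ℝ => κχ (φ p)) q :=
        (hκχcd.contDiffAt.of_le (by exact_mod_cast le_top)).comp q ((hφA q hq).of_le (by norm_num))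
      have l2 : ContDiffAt ℝ 1 G1 q := by
        rw [hG1]
        exact (((hζ1.contDiffAt).pow 2).mul ((hhA q hq).of_le (by norm_num))).mul
          ((((hψA q hq).of_le (by norm_num)).pow 2).mul (huA q hq))
      exact l1.mul l2
    have hF₂cd : ContDiff ℝ 1 F₂ := by
      rw [hF₂]
      apply indicator_contDiff hΩ hφcont hbd hε0 hκχz
      intro q hq
      have l1 : ContDiffAt ℝ 1 (fun p : ℝ × ℝ => κχ (φ p)) q :=
        (hκχcd.contDiffAt.of_le (by exact_mod_cast le_top)).comp q ((hφA q hq).of_le (by norm_num))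
      have l2 : ContDiffAt ℝ 1 G2 q := by
        rw [hG2]
        exact (((hζ1.contDiffAt).pow 2).mul ((hhA q hq).of_le (by norm_num))).mul
          ((((hψA q hq).of_le (by norm_num)).pow 2).mul (hvA q hq))
      exact l1.mul l2
    -- continuity of the T's, W, Z
    have hκφc : ∀ q ∈ Ω, ContinuousAt (fun p : ℝ × ℝ => κχ (φ p)) q := fun q hq =>
      (hκχcd.continuous.continuousAt).comp (hφA q hq).continuousAt
    have hT1c : Continuous T1 := by
      rw [hT1]
      apply indicator_continuous hΩ hφcont hbd hε0 hκχz
      intro q hq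
      apply (hκφc q hq).mul
      rw [ht1G]
      exact ((((continuousAt_const.mul (hζ1.continuous.continuousAt)).mul
        ((hhA q hq).continuousAt)).mul (((hψA q hq).continuousAt).pow 2)).mul
        (((hζxc.continuousAt).mul ((huA q hq).continuousAt)).add
          ((hζyc.continuousAt).mul ((hvA q hq).continuousAt))))
    have hT2c : Continuous T2 := by
      rw [hT2]
      apply indicator_continuous hΩ hφcont hbd hε0 hκT2z
      intro q hq
      apply ContinuousAt.mul
      · exact (hκT2c.continuousAt).comp (hφA q hq).continuousAt
      rw [ht2G]
      exact ((((continuousAt_const.mul ((hζ1.continuous.continuousAt).pow 2)).mul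
        ((hhA q hq).continuousAt)).mul (((hψA q hq).continuousAt).pow 2)).mul
        (((hφxc q hq).mul ((huA q hq).continuousAt)).add
          ((hφyc q hq).mul ((hvA q hq).continuousAt))))
    have hT3c : Continuous T3 := by
      rw [hT3]
      apply indicator_continuous hΩ hφcont hbd hε0 hκχz
      intro q hq
      apply (hκφc q hq).mul
      rw [ht3G]
      exact (((hζ1.continuous.continuousAt).pow 2).mul (((hψA q hq).continuousAt).pow 2)).mul
        ((((huA q hq).continuousAt).pow 2).add (((hvA q hq).continuousAt).pow 2))
    have hWc : Continuous W := by
      rw [hW]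
      apply indicator_continuous hΩ hφcont hbd hε0 hκχz
      intro q hq
      apply (hκφc q hq).mul
      rw [hwG]
      exact (((hφA q hq).continuousAt).pow 2).mul
        (((hζxc.continuousAt).pow 2).add ((hζyc.continuousAt).pow 2))
    have hZc : Continuous Z := by
      rw [hZ]
      apply indicator_continuous hΩ hφcont hbd hε0 hκZfz
      intro q hq
      apply ContinuousAt.mul
      · exact (hκZfc.continuousAt).comp (hφA q hq).continuousAt
      rw [hzG]
      exact (continuousAt_const.mul ((hζ1.continuous.continuousAt).pow 2)).mul
        (((hφxc q hq).pow 2).add ((hφyc q hq).pow 2))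
    -- ============ supports ============
    have hopen2R : IsOpen {q : ℝ × ℝ | 2*R < Real.sqrt (q.1^2 + q.2^2)} := by
      apply isOpen_lt continuous_const
      apply Real.continuous_sqrt.comp; fun_prop
    have hζev0 : ∀ q : ℝ × ℝ, 2*R < Real.sqrt (q.1^2 + q.2^2) →
        ζ =ᶠ[nhds q] (fun _ => (0:ℝ)) := by
      intro q hq
      filter_upwards [hopen2R.mem_nhds hq] with y hy
      exact hζout y (le_of_lt hy)
    have hζd0 : ∀ q : ℝ × ℝ, 2*R < Real.sqrt (q.1^2 + q.2^2) →
        ζ q = 0 ∧ pdx ζ q = 0 ∧ pdy ζ q = 0 := fun q hq =>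
      ⟨hζout q (le_of_lt hq), pdx_const (hζev0 q hq), pdy_const (hζev0 q hq)⟩
    have hsupp : ∀ X : ℝ × ℝ → ℝ, (∀ q, 2*R < Real.sqrt (q.1^2 + q.2^2) → X q = 0) →
        HasCompactSupport X := by
      intro X hX
      apply HasCompactSupport.of_support_subset_isCompact hScp
      intro q hq
      simp only [Function.mem_support] at hq
      by_contra hqb
      simp only [hSbox, mem_setOf_eq, not_le] at hqb
      exact hq (hX q hqb)
    have hF₁supp : ∀ q, 2*R < Real.sqrt (q.1^2 + q.2^2) → F₁ q = 0 := by
      intro q hq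
      rw [hF₁]
      by_cases hqΩ : q ∈ Ω
      · rw [Set.indicator_of_mem hqΩ, hG1]
        simp only
        rw [(hζd0 q hq).1]; ring
      · rw [Set.indicator_of_notMem hqΩ]
    have hF₂supp : ∀ q, 2*R < Real.sqrt (q.1^2 + q.2^2) → F₂ q = 0 := by
      intro q hq
      rw [hF₂]
      by_cases hqΩ : q ∈ Ω
      · rw [Set.indicator_of_mem hqΩ, hG2]
        simp only
        rw [(hζd0 q hq).1]; ring
      · rw [Set.indicator_of_notMem hqΩ]
    have hT1supp : ∀ q, 2*R < Real.sqrt (q.1^2 + q.2^2) → T1 q = 0 := by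
      intro q hq
      rw [hT1]
      by_cases hqΩ : q ∈ Ω
      · rw [Set.indicator_of_mem hqΩ, ht1G]
        simp only
        rw [(hζd0 q hq).1]; ring
      · rw [Set.indicator_of_notMem hqΩ]
    have hT2supp : ∀ q, 2*R < Real.sqrt (q.1^2 + q.2^2) → T2 q = 0 := by
      intro q hq
      rw [hT2]
      by_cases hqΩ : q ∈ Ω
      · rw [Set.indicator_of_mem hqΩ, ht2G]
        simp only
        rw [(hζd0 q hq).1]; ring
      · rw [Set.indicator_of_notMem hqΩ]
    have hT3supp : ∀ q, 2*R < Real.sqrt (q.1^2 + q.2^2) → T3 q = 0 := by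
      intro q hq
      rw [hT3]
      by_cases hqΩ : q ∈ Ω
      · rw [Set.indicator_of_mem hqΩ, ht3G]
        simp only
        rw [(hζd0 q hq).1]; ring
      · rw [Set.indicator_of_notMem hqΩ]
    have hWsupp : ∀ q, 2*R < Real.sqrt (q.1^2 + q.2^2) → W q = 0 := by
      intro q hq
      rw [hW]
      by_cases hqΩ : q ∈ Ω
      · rw [Set.indicator_of_mem hqΩ, hwG]
        simp only
        rw [(hζd0 q hq).2.1, (hζd0 q hq).2.2]; ring
      · rw [Set.indicator_of_notMem hqΩ]
    have hZsupp : ∀ q, 2*R < Real.sqrt (q.1^2 + q.2^2) → Z q = 0 := by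
      intro q hq
      rw [hZ]
      by_cases hqΩ : q ∈ Ω
      · rw [Set.indicator_of_mem hqΩ, hzG]
        simp only
        rw [(hζd0 q hq).1]; ring
      · rw [Set.indicator_of_notMem hqΩ]
    -- integrability
    have hT1int : MeasureTheory.Integrable T1 :=
      hT1c.integrable_of_hasCompactSupport (hsupp T1 hT1supp)
    have hT2int : MeasureTheory.Integrable T2 :=
      hT2c.integrable_of_hasCompactSupport (hsupp T2 hT2supp)
    have hT3int : MeasureTheory.Integrable T3 :=
      hT3c.integrable_of_hasCompactSupport (hsupp T3 hT3supp)
    have hWint : MeasureTheory.Integrable W :=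
      hWc.integrable_of_hasCompactSupport (hsupp W hWsupp)
    have hZint : MeasureTheory.Integrable Z :=
      hZc.integrable_of_hasCompactSupport (hsupp Z hZsupp)
    -- ============ pointwise divergence identity ============
    have hdivpt : ∀ p, pdx F₁ p + pdy F₂ p = T1 p + T2 p + T3 p := by
      intro p
      by_cases hp : p ∈ Ω
      · -- differentiability of the pieces at p
        have hζd : DifferentiableAt ℝ ζ p := hζdiff p
        have hφd : DifferentiableAt ℝ φ p := (hφA p hp).differentiableAt (by norm_num)
        have hhd : DifferentiableAt ℝ h p := (hhA p hp).differentiableAt (by norm_num)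
        have hψd : DifferentiableAt ℝ ψ p := (hψA p hp).differentiableAt (by norm_num)
        have hud : DifferentiableAt ℝ u p := (huA p hp).differentiableAt one_ne_zero
        have hvd : DifferentiableAt ℝ v p := (hvA p hp).differentiableAt one_ne_zero
        have hPUd : DifferentiableAt ℝ (fun q => ψ q^2 * u q) p := (hψd.pow 2).mul hud
        have hPVd : DifferentiableAt ℝ (fun q => ψ q^2 * v q) p := (hψd.pow 2).mul hvd
        have hχder : HasDerivAt χ (deriv χ (φ p)) (φ p) :=
          ((hχc.differentiable (by simp)) (φ p)).hasDerivAt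
        -- x-direction slices
        have sζ := pdx_hasDerivAt hζd
        have sφ := pdx_hasDerivAt hφd
        have sh := pdx_hasDerivAt hhd
        have sPU := pdx_hasDerivAt hPUd
        have sχ : HasDerivAt (fun t => χ (φ (t, p.2))) (deriv χ (φ p) * pdx φ p) p.1 := by
          have := hχder.comp p.1 sφ
          exact this
        have hD1 := (sχ.pow 2).mul (((sζ.pow 2).mul sh).mul sPU)
        -- y-direction slices
        have tζ := pdy_hasDerivAt hζd
        have tφ := pdy_hasDerivAt hφd
        have th := pdy_hasDerivAt hhd
        have tPV := pdy_hasDerivAt hPVd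
        have tχ : HasDerivAt (fun t => χ (φ (p.1, t))) (deriv χ (φ p) * pdy φ p) p.2 := by
          have := hχder.comp p.2 tφ
          exact this
        have hD2 := (tχ.pow 2).mul (((tζ.pow 2).mul th).mul tPV)
        -- identification of the partial derivatives of F₁, F₂
        have hFx : pdx F₁ p = (2 * χ (φ p)^(2-1) * (deriv χ (φ p) * pdx φ p)) *
            ((ζ p^2 * h p) * (ψ p^2 * u p)) + χ (φ p)^2 *
            (((2 * ζ p^(2-1) * pdx ζ p) * h p + ζ p^2 * pdx h p) * (ψ p^2 * u p) +
              (ζ p^2 * h p) * pdx (fun q => ψ q^2 * u q) p) := by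
          have hev : F₁ =ᶠ[nhds p] (fun q => (χ (φ q))^2 * (ζ q^2 * h q * (ψ q^2 * u q))) := by
            filter_upwards [hΩ.mem_nhds hp] with q hq
            rw [hF₁, Set.indicator_of_mem hq, hκχ, hG1]
          rw [pdx_congr hev]
          exact hD1.deriv
        have hFy : pdy F₂ p = (2 * χ (φ p)^(2-1) * (deriv χ (φ p) * pdy φ p)) *
            ((ζ p^2 * h p) * (ψ p^2 * v p)) + χ (φ p)^2 *
            (((2 * ζ p^(2-1) * pdy ζ p) * h p + ζ p^2 * pdy h p) * (ψ p^2 * v p) +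
              (ζ p^2 * h p) * pdy (fun q => ψ q^2 * v q) p) := by
          have hev : F₂ =ᶠ[nhds p] (fun q => (χ (φ q))^2 * (ζ q^2 * h q * (ψ q^2 * v q))) := by
            filter_upwards [hΩ.mem_nhds hp] with q hq
            rw [hF₂, Set.indicator_of_mem hq, hκχ, hG2]
          rw [pdy_congr hev]
          exact hD2.deriv
        have hdiveq := hdiv p hp
        rw [hFx, hFy, hT1, hT2, hT3, Set.indicator_of_mem hp, Set.indicator_of_mem hp,
          Set.indicator_of_mem hp, hκχ, hκT2, ht1G, ht2G, ht3G]
        simp only [pow_one, ← hu, ← hv]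
        linear_combination (χ (φ p)^2 * ζ p^2 * h p) * hdiveq
      · have hz1 : pdx F₁ p = 0 := by
          rw [hF₁]
          exact pdx_const (indicator_eventually_zero hΩ hφcont hbd hε0 hκχz G1 hp)
        have hz2 : pdy F₂ p = 0 := by
          rw [hF₂]
          exact pdy_const (indicator_eventually_zero hΩ hφcont hbd hε0 hκχz G2 hp)
        rw [hz1, hz2, hT1, hT2, hT3, Set.indicator_of_notMem hp, Set.indicator_of_notMem hp,
          Set.indicator_of_notMem hp]
        ring
    -- ============ the integral identity ============
    have hdiv0 : ∫ p : ℝ × ℝ, (pdx F₁ p + pdy F₂ p) = 0 := by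
      apply integral_divergence_zero F₁ F₂ hF₁cd hF₂cd (2*R) (by positivity) hF₁supp hF₂supp
    have hTsum : (∫ p : ℝ × ℝ, T1 p) + (∫ p : ℝ × ℝ, T2 p) + (∫ p : ℝ × ℝ, T3 p) = 0 := by
      have i1 : ∫ p : ℝ × ℝ, (T1 p + T2 p) = (∫ p : ℝ × ℝ, T1 p) + (∫ p : ℝ × ℝ, T2 p) :=
        MeasureTheory.integral_add hT1int hT2int
      have i2 : ∫ p : ℝ × ℝ, (T1 p + T2 p + T3 p) =
          (∫ p : ℝ × ℝ, (T1 p + T2 p)) + (∫ p : ℝ × ℝ, T3 p) :=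
        MeasureTheory.integral_add (hT1int.add hT2int) hT3int
      rw [← i1, ← i2, ← hdiv0]
      apply MeasureTheory.integral_congr_ae
      filter_upwards with p
      exact (hdivpt p).symm
    -- ============ nonnegativity ============
    have hT3nn : ∀ q, 0 ≤ T3 q := by
      intro q
      rw [hT3]
      apply Set.indicator_nonneg
      intro q' _
      rw [hκχ, ht3G]
      positivity
    -- ============ pointwise bound for |T1| ============
    have hptw1 : ∀ q, |T1 q| ≤ (1/4) * T3 q + 4 * W q := by
      intro q
      by_cases hq : q ∈ Ω
      · rw [hT1, hT3, hW, Set.indicator_of_mem hq, Set.indicator_of_mem hq,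
          Set.indicator_of_mem hq, hκχ, ht1G, ht3G, hwG]
        simp only
        have hrel := hψh q hq
        have he : χ (φ q)^2 * (2 * ζ q * h q * ψ q^2 * (pdx ζ q * u q + pdy ζ q * v q))
            = 2*((ζ q * χ (φ q) * ψ q * u q) * (χ (φ q) * φ q * pdx ζ q)
              + (ζ q * χ (φ q) * ψ q * v q) * (χ (φ q) * φ q * pdy ζ q)) := by
          linear_combination (2 * χ (φ q)^2 * ζ q * (pdx ζ q * u q + pdy ζ q * v q)) * hrel
        rw [he]
        refine le_trans (amgm_aux _ _ _ _) (le_of_eq ?_)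
        ring
      · rw [hT1, hT3, hW, Set.indicator_of_notMem hq, Set.indicator_of_notMem hq,
          Set.indicator_of_notMem hq]
        simp
    -- ============ pointwise bound for |T2| ============
    have hptw2 : ∀ q, |T2 q| ≤ (1/4) * T3 q + Z q := by
      intro q
      by_cases hq : q ∈ Ω
      · rw [hT2, hT3, hZ, Set.indicator_of_mem hq, Set.indicator_of_mem hq,
          Set.indicator_of_mem hq, hκχ, hκT2, hκZf, ht2G, ht3G, hzG]
        simp only
        have hrel := hψh q hq
        have he : χ (φ q) * deriv χ (φ q) * (2 * ζ q^2 * h q * ψ q^2 * (pdx φ q * u q + pdy φ q * v q))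
            = 2*((ζ q * χ (φ q) * ψ q * u q) * (ζ q * (deriv χ (φ q) * φ q) * pdx φ q)
              + (ζ q * χ (φ q) * ψ q * v q) * (ζ q * (deriv χ (φ q) * φ q) * pdy φ q)) := by
          linear_combination (2 * χ (φ q) * deriv χ (φ q) * ζ q^2 * (pdx φ q * u q + pdy φ q * v q)) * hrel
        rw [he]
        refine le_trans (amgm_aux _ _ _ _) (le_of_eq ?_)
        ring
      · rw [hT2, hT3, hZ, Set.indicator_of_notMem hq, Set.indicator_of_notMem hq,
          Set.indicator_of_notMem hq]
        simp
    -- ============ energy bounded by the two error terms ============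
    have hIb : (∫ p : ℝ × ℝ, T3 p) ≤ 8*(∫ p : ℝ × ℝ, W p) + 2*(∫ p : ℝ × ℝ, Z p) := by
      have habs1 : |∫ p : ℝ × ℝ, T1 p| ≤ ∫ p : ℝ × ℝ, |T1 p| := by
        have := MeasureTheory.norm_integral_le_integral_norm (μ := MeasureTheory.volume) T1
        simpa [Real.norm_eq_abs] using this
      have habs2 : |∫ p : ℝ × ℝ, T2 p| ≤ ∫ p : ℝ × ℝ, |T2 p| := by
        have := MeasureTheory.norm_integral_le_integral_norm (μ := MeasureTheory.volume) T2
        simpa [Real.norm_eq_abs] using this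
      have hi1 : ∫ p : ℝ × ℝ, |T1 p| ≤ ∫ p : ℝ × ℝ, ((1/4) * T3 p + 4 * W p) := by
        apply MeasureTheory.integral_mono hT1int.abs
          ((hT3int.const_mul (1/4)).add (hWint.const_mul 4))
        intro q
        exact hptw1 q
      have hi2 : ∫ p : ℝ × ℝ, |T2 p| ≤ ∫ p : ℝ × ℝ, ((1/4) * T3 p + Z p) := by
        apply MeasureTheory.integral_mono hT2int.abs
          ((hT3int.const_mul (1/4)).add hZint)
        intro q
        exact hptw2 q
      have he1 : ∫ p : ℝ × ℝ, ((1/4) * T3 p + 4 * W p)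
          = (1/4)*(∫ p : ℝ × ℝ, T3 p) + 4*(∫ p : ℝ × ℝ, W p) := by
        rw [MeasureTheory.integral_add (hT3int.const_mul (1/4)) (hWint.const_mul 4),
          MeasureTheory.integral_const_mul, MeasureTheory.integral_const_mul]
      have he2 : ∫ p : ℝ × ℝ, ((1/4) * T3 p + Z p)
          = (1/4)*(∫ p : ℝ × ℝ, T3 p) + (∫ p : ℝ × ℝ, Z p) := by
        rw [MeasureTheory.integral_add (hT3int.const_mul (1/4)) hZint,
          MeasureTheory.integral_const_mul]
      have h4 : (∫ p : ℝ × ℝ, T3 p) = -(∫ p : ℝ × ℝ, T1 p) - (∫ p : ℝ × ℝ, T2 p) := by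
        linarith [hTsum]
      have l1 : -(∫ p : ℝ × ℝ, T1 p) ≤ |∫ p : ℝ × ℝ, T1 p| := neg_le_abs _
      have l2 : -(∫ p : ℝ × ℝ, T2 p) ≤ |∫ p : ℝ × ℝ, T2 p| := neg_le_abs _
      linarith
    -- ============ bound for ∫ W ============
    have hSboxfin : MeasureTheory.volume Sbox ≤ ENNReal.ofReal (4*R) * ENNReal.ofReal (4*R) := by
      calc MeasureTheory.volume Sbox
          ≤ MeasureTheory.volume (Icc ((-(2*R), -(2*R)) : ℝ × ℝ) ((2*R, 2*R) : ℝ × ℝ)) := by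
            apply measure_mono
            intro p hp
            simp only [hSbox, mem_setOf_eq] at hp
            have h1 := le_trans (abs_fst_le_sqrt p) hp
            have h2 := le_trans (abs_snd_le_sqrt p) hp
            rw [abs_le] at h1 h2
            constructor <;> constructor <;> simp [h1.1, h1.2, h2.1, h2.2]
        _ = ENNReal.ofReal (4*R) * ENNReal.ofReal (4*R) := by
            rw [Icc_prod_eq, MeasureTheory.Measure.volume_eq_prod,
              MeasureTheory.Measure.prod_prod]
            simp only [Real.volume_Icc]
            ring_nf
    have hopenR : IsOpen {q : ℝ × ℝ | Real.sqrt (q.1^2 + q.2^2) < R} := by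
      apply isOpen_lt _ continuous_const
      apply Real.continuous_sqrt.comp; fun_prop
    have hζd1 : ∀ q : ℝ × ℝ, Real.sqrt (q.1^2 + q.2^2) < R →
        pdx ζ q = 0 ∧ pdy ζ q = 0 := by
      intro q hq
      have hev : ζ =ᶠ[nhds q] (fun _ => (1:ℝ)) := by
        filter_upwards [hopenR.mem_nhds hq] with y hy
        exact hζin y (le_of_lt hy)
      exact ⟨pdx_const hev, pdy_const hev⟩
    have hWptw : ∀ q, W q ≤ Sbox.indicator (fun _ => ε'^2*(C/R)^2) q := by
      intro q
      by_cases hq : q ∈ Ω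
      · by_cases hlt : Real.sqrt (q.1^2 + q.2^2) < R
        · rw [hW, Set.indicator_of_mem hq, hκχ, hwG]
          simp only
          rw [(hζd1 q hlt).1, (hζd1 q hlt).2]
          have : χ (φ q)^2 * (φ q^2 * ((0:ℝ)^2 + (0:ℝ)^2)) = 0 := by ring
          rw [this]
          exact Set.indicator_nonneg (fun _ _ => by positivity) q
        · by_cases h2R : 2*R < Real.sqrt (q.1^2 + q.2^2)
          · rw [hWsupp q h2R]
            exact Set.indicator_nonneg (fun _ _ => by positivity) q
          · have hqS : q ∈ Sbox := not_lt.1 h2R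
            rw [Set.indicator_of_mem hqS, hW, Set.indicator_of_mem hq, hκχ, hwG]
            simp only
            have hφs : |φ q| ≤ ε' := hR₀ q hq (le_trans hRR₀ (not_lt.1 hlt))
            have hφsq : φ q^2 ≤ ε'^2 := by
              rw [← sq_abs]
              exact pow_le_pow_left₀ (abs_nonneg _) hφs 2
            have hχsq : χ (φ q)^2 ≤ 1 := pow_le_one₀ (hχ0 (φ q)) (hχ1 (φ q))
            have hgr : pdx ζ q^2 + pdy ζ q^2 ≤ (C/R)^2 := by
              have h1 := hζgrad q
              have h2 : pdx ζ q^2 + pdy ζ q^2 = (Real.sqrt (pdx ζ q^2 + pdy ζ q^2))^2 :=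
                (Real.sq_sqrt (by positivity)).symm
              rw [h2]
              exact pow_le_pow_left₀ (Real.sqrt_nonneg _) h1 2
            calc χ (φ q)^2 * (φ q^2 * (pdx ζ q^2 + pdy ζ q^2))
                ≤ 1 * (φ q^2 * (pdx ζ q^2 + pdy ζ q^2)) :=
                  mul_le_mul_of_nonneg_right hχsq (by positivity)
              _ = φ q^2 * (pdx ζ q^2 + pdy ζ q^2) := one_mul _
              _ ≤ ε'^2 * (C/R)^2 := mul_le_mul hφsq hgr (by positivity) (by positivity)
      · rw [hW, Set.indicator_of_notMem hq]
        exact Set.indicator_nonneg (fun _ _ => by positivity) q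
    have hWI : (∫ p : ℝ × ℝ, W p) ≤ 16*C^2*ε'^2 := by
      have hEintS : MeasureTheory.Integrable (Sbox.indicator (fun _ => ε'^2*(C/R)^2)) := by
        rw [MeasureTheory.integrable_indicator_iff hScl.measurableSet]
        refine MeasureTheory.integrableOn_const (lt_top_iff_ne_top.1 ?_)
        exact lt_of_le_of_lt hSboxfin (ENNReal.mul_lt_top ENNReal.ofReal_lt_top ENNReal.ofReal_lt_top)
      have h1 := MeasureTheory.integral_mono hWint hEintS hWptw
      rw [MeasureTheory.integral_indicator_const _ hScl.measurableSet, smul_eq_mul, MeasureTheory.measureReal_def] at h1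
      have h3 : (MeasureTheory.volume Sbox).toReal ≤ 16*R^2 := by
        have h4 := ENNReal.toReal_mono
          (by exact ENNReal.mul_ne_top ENNReal.ofReal_ne_top ENNReal.ofReal_ne_top) hSboxfin
        rw [ENNReal.toReal_mul, ENNReal.toReal_ofReal (by positivity)] at h4
        have e44 : 4*R*(4*R) = 16*R^2 := by ring
        linarith [h4]
      have h5 : (MeasureTheory.volume Sbox).toReal * (ε'^2*(C/R)^2) ≤ 16*R^2 * (ε'^2*(C/R)^2) :=
        mul_le_mul_of_nonneg_right h3 (by positivity)
      have h6 : 16*R^2 * (ε'^2*(C/R)^2) = 16*C^2*ε'^2 := by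
        field_simp
      linarith
    -- ============ bound for ∫ Z ============
    have hZptw : ∀ q, Z q ≤ (En n).indicator (fun _ => κZ) q := by
      intro q
      by_cases hq : q ∈ Ω
      · by_cases hd : deriv χ (φ q) = 0
        · rw [hZ, Set.indicator_of_mem hq, hκZf]
          simp only
          rw [hd]
          have : ((0:ℝ) * φ q)^2 * zG q = 0 := by ring
          rw [this]
          exact Set.indicator_nonneg (fun _ _ => hκZ0) q
        · by_cases h2R : 2*R < Real.sqrt (q.1^2 + q.2^2)
          · rw [hZsupp q h2R]
            exact Set.indicator_nonneg (fun _ _ => hκZ0) q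
          · have hφub : |φ q| ≤ 2*ε := by
              by_contra hcc
              push_neg at hcc
              exact hd (hχdz2 _ hcc)
            have hφlb : ε < |φ q| := by
              by_contra hcc
              push_neg at hcc
              exact hd (hχdz _ hcc)
            have hφne : φ q ≠ 0 := by
              intro h0
              rw [h0] at hφlb
              simp at hφlb
              linarith
            have hqE : q ∈ En n := by
              rw [hEn]
              refine ⟨⟨⟨hq, hφne⟩, ?_⟩, not_lt.1 h2R⟩
              intro hmem
              have h7 := hmem.2
              rw [← h2ε] at h7
              linarith
            rw [Set.indicator_of_mem hqE, hZ, Set.indicator_of_mem hq, hκZf, hzG]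
            simp only
            have hb1 : (deriv χ (φ q) * φ q)^2 ≤ c₀^2 := by
              rw [← sq_abs]
              exact pow_le_pow_left₀ (abs_nonneg _) (hχdb (φ q)) 2
            have hb2 : ζ q^2 ≤ Bζ := hBζ q (not_lt.1 h2R)
            have hb3 : pdx φ q^2 + pdy φ q^2 ≤ Mg := hMg q hq (not_lt.1 h2R)
            calc (deriv χ (φ q) * φ q)^2 * (4 * ζ q^2 * (pdx φ q^2 + pdy φ q^2))
                ≤ c₀^2 * (4 * ζ q^2 * (pdx φ q^2 + pdy φ q^2)) :=
                  mul_le_mul_of_nonneg_right hb1 (by positivity)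
              _ ≤ c₀^2 * (4 * (Bζ * Mg)) := by
                  apply mul_le_mul_of_nonneg_left _ (by positivity)
                  have h8 : ζ q^2 * (pdx φ q^2 + pdy φ q^2) ≤ Bζ * Mg :=
                    mul_le_mul hb2 hb3 (by positivity) hBζ0
                  linarith
              _ = κZ := by rw [hκZ]; ring
      · rw [hZ, Set.indicator_of_notMem hq]
        exact Set.indicator_nonneg (fun _ _ => hκZ0) q
    have hZI : (∫ p : ℝ × ℝ, Z p) ≤ m*ρ^2 := by
      have hEint : MeasureTheory.Integrable ((En n).indicator (fun _ => κZ)) := by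
        rw [MeasureTheory.integrable_indicator_iff (hEnmeas n)]
        refine MeasureTheory.integrableOn_const (lt_top_iff_ne_top.1 ?_)
        exact lt_trans hn1 ENNReal.ofReal_lt_top
      have h1 := MeasureTheory.integral_mono hZint hEint hZptw
      rw [MeasureTheory.integral_indicator_const _ (hEnmeas n), smul_eq_mul, MeasureTheory.measureReal_def] at h1
      have h2 : (MeasureTheory.volume (En n)).toReal < m*ρ^2/(κZ+1) :=
        ENNReal.toReal_lt_of_lt_ofReal hn1
      have h9 : (MeasureTheory.volume (En n)).toReal * κZ ≤ (m*ρ^2/(κZ+1)) * κZ :=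
        mul_le_mul_of_nonneg_right h2.le hκZ0
      have h10 : (m*ρ^2/(κZ+1)) * κZ ≤ m*ρ^2 := by
        rw [div_mul_eq_mul_div, div_le_iff₀ (by positivity)]
        have hmm2 : (0:ℝ) ≤ m*ρ^2 := by positivity
        have : m*ρ^2*κZ ≤ m*ρ^2*(κZ+1) := mul_le_mul_of_nonneg_left (by linarith) hmm2
        linarith
      linarith
    -- ============ lower bound for ∫ T3 ============
    have hlowptw : ∀ q, (Metric.ball p₁ ρ).indicator (fun _ => m) q ≤ T3 q := by
      intro q
      by_cases hq : q ∈ Metric.ball p₁ ρ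
      · rw [Set.indicator_of_mem hq]
        obtain ⟨hqΩ, hqA, hqφ⟩ := hballs q hq
        have hχ1' : χ (φ q) = 1 := hχone _ (by rw [h2ε]; linarith)
        have hsq : Real.sqrt (q.1^2 + q.2^2) ≤ R := by
          have e : q.1^2 + q.2^2 = (p₁.1+(q.1-p₁.1))^2 + (p₁.2+(q.2-p₁.2))^2 := by ring
          have h1 : Real.sqrt (q.1^2 + q.2^2) ≤ Real.sqrt (p₁.1^2 + p₁.2^2)
              + Real.sqrt ((q.1-p₁.1)^2 + (q.2-p₁.2)^2) := by
            rw [e]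
            exact sqrt_tri _ _ _ _
          have hdd := Metric.mem_ball.1 hq
          rw [Prod.dist_eq] at hdd
          have hd1 : |q.1-p₁.1| < ρ := by
            have := lt_of_le_of_lt (le_max_left (dist q.1 p₁.1) (dist q.2 p₁.2)) hdd
            rwa [Real.dist_eq] at this
          have hd2 : |q.2-p₁.2| < ρ := by
            have := lt_of_le_of_lt (le_max_right (dist q.1 p₁.1) (dist q.2 p₁.2)) hdd
            rwa [Real.dist_eq] at this
          have h3 : (q.1-p₁.1)^2 + (q.2-p₁.2)^2 ≤ (2*ρ)^2 := by
            have e1 : (q.1-p₁.1)^2 ≤ ρ^2 := by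
              rw [← sq_abs]
              exact pow_le_pow_left₀ (abs_nonneg _) hd1.le 2
            have e2 : (q.2-p₁.2)^2 ≤ ρ^2 := by
              rw [← sq_abs]
              exact pow_le_pow_left₀ (abs_nonneg _) hd2.le 2
            have e3 : (2*ρ)^2 = 4*ρ^2 := by ring
            have e4 : (0:ℝ) ≤ ρ^2 := sq_nonneg ρ
            linarith
          have h2 : Real.sqrt ((q.1-p₁.1)^2 + (q.2-p₁.2)^2) ≤ 2*ρ := by
            calc Real.sqrt ((q.1-p₁.1)^2 + (q.2-p₁.2)^2) ≤ Real.sqrt ((2*ρ)^2) :=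
                  Real.sqrt_le_sqrt h3
              _ = 2*ρ := Real.sqrt_sq (by positivity)
          linarith [hRp₁]
        have hζq : ζ q = 1 := hζin q hsq
        rw [hT3, Set.indicator_of_mem hqΩ, hκχ, ht3G]
        simp only
        rw [hχ1', hζq]
        have e2 : (1:ℝ)^2 * ((1:ℝ)^2 * ψ q^2 * (u q^2 + v q^2)) = A q := by
          rw [hA]; ring
        rw [e2]
        exact le_of_lt hqA
      · rw [Set.indicator_of_notMem hq]
        exact hT3nn q
    have hlowI : m * (4*ρ^2) ≤ ∫ p : ℝ × ℝ, T3 p := by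
      have hmball : MeasureTheory.Integrable ((Metric.ball p₁ ρ).indicator (fun _ => m)) := by
        rw [MeasureTheory.integrable_indicator_iff Metric.isOpen_ball.measurableSet]
        refine MeasureTheory.integrableOn_const (lt_top_iff_ne_top.1 ?_)
        exact MeasureTheory.measure_ball_lt_top
      have h1 := MeasureTheory.integral_mono hmball hT3int hlowptw
      rw [MeasureTheory.integral_indicator_const _ Metric.isOpen_ball.measurableSet,
        smul_eq_mul, MeasureTheory.measureReal_def] at h1
      have h2 : (MeasureTheory.volume (Metric.ball p₁ ρ)).toReal = 4*ρ^2 := by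
        rw [← ball_prod_same, MeasureTheory.Measure.volume_eq_prod,
          MeasureTheory.Measure.prod_prod, Real.volume_ball, Real.volume_ball,
          ← ENNReal.ofReal_mul (by positivity), ENNReal.toReal_ofReal (by positivity)]
        ring
      rw [h2] at h1
      linarith
    -- ============ final contradiction ============
    have hε'sq : ε'^2 = m*ρ^2/(256*C^2) := by
      have e16 : ((16:ℝ)*C)^2 = 256*C^2 := by ring
      rw [hε', div_pow, mul_pow, Real.sq_sqrt hm0.le, e16]
    have he8 : 8*(16*C^2*ε'^2) = m*ρ^2/2 := by
      rw [hε'sq]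
      field_simp
      ring
    have hfin1 : m*(4*ρ^2) ≤ 8*(16*C^2*ε'^2) + 2*(m*ρ^2) := by
      have hws : 8*(∫ p : ℝ × ℝ, W p) ≤ 8*(16*C^2*ε'^2) :=
        mul_le_mul_of_nonneg_left hWI (by norm_num)
      have hzs : 2*(∫ p : ℝ × ℝ, Z p) ≤ 2*(m*ρ^2) :=
        mul_le_mul_of_nonneg_left hZI (by norm_num)
      linarith
    have hfin2 : m*(4*ρ^2) ≤ m*ρ^2/2 + 2*(m*ρ^2) := by rw [← he8]; exact hfin1
    have hfin3 : m*(4*ρ^2) = 4*(m*ρ^2) := by ring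
    have hfin4 : (0:ℝ) < m*ρ^2 := by positivity
    linarith



  constructor
  · have hEq : EqOn (fun p => ((pdx h p) ^ 2 + (pdy h p) ^ 2) * ψ p ^ 2)
        (fun _ => (0:ℝ)) Ω := by
      intro p hp
      show ((pdx h p) ^ 2 + (pdy h p) ^ 2) * ψ p ^ 2 = 0
      rw [(key p hp).1, (key p hp).2]
      ring
    rw [MeasureTheory.setIntegral_congr_fun hΩ.measurableSet hEq]
    simp
  · exact key
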